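/- With notation as in the context, M_λ = M[ker λ]; that is, e·M ∩ M = {m ∈ M : (ker λ)·m = 0}. -/

import Mathlib

/-- With `𝒪` a complete DVR with fraction field `E`, `T` a commutative
reduced finite flat local `𝒪`-algebra, `λ : T → 𝒪` an `𝒪`-algebra homomorphism,
`T_E = T ⊗_𝒪 E` (axiomatised as the localization of `T` at the image of `𝒪 ∖ {0}`),
`e ∈ T_E` the idempotent attached to `λ` (characterised by `λ_E e = 1` and `e` lying in
every prime of `T_E` other than `ker λ_E`), and `M` a finitely generated `T`-module that
is free as an `𝒪`-module, sitting inside `M_E = M ⊗_𝒪 E` via `ι`: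
`M_λ = M[ker λ]`, i.e. `e·M ∩ M = {m ∈ M : (ker λ)·m = 0}`. -/
theorem statement2
    {O : Type*} [CommRing O] [IsDomain O] [IsDiscreteValuationRing O]
    [IsAdicComplete (IsLocalRing.maximalIdeal O) O]
    {E : Type*} [Field E] [Algebra O E] [IsFractionRing O E]
    {T : Type*} [CommRing T] [IsReduced T] [IsLocalRing T]
    [Algebra O T] [Module.Finite O T] [Module.Flat O T]
    (lam : T →ₐ[O] O)
    {TE : Type*} [CommRing TE] [Algebra T TE] [Algebra O TE] [Algebra E TE]
    [IsScalarTower O T TE] [IsScalarTower O E TE]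
    [IsLocalization (Algebra.algebraMapSubmonoid T (nonZeroDivisors O)) TE]
    (lamE : TE →ₐ[E] E) (e : TE)
    (hlamE : ∀ t : T, lamE (algebraMap T TE t) = algebraMap O E (lam t))
    (he1 : lamE e = 1)
    (he2 : ∀ P : Ideal TE, P.IsPrime → P ≠ RingHom.ker lamE → e ∈ P)
    {M : Type*} [AddCommGroup M] [Module O M] [Module T M] [IsScalarTower O T M]
    [Module.Finite T M] [Module.Free O M]
    {ME : Type*} [AddCommGroup ME] [Module O ME] [Module TE ME] [IsScalarTower O TE ME]
    (iota : M →ₗ[O] ME) [IsLocalizedModule (nonZeroDivisors O) iota]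
    (hiota : ∀ (t : T) (m : M), iota (t • m) = algebraMap T TE t • iota m) :
    ∀ m : M, (∃ m' : M, iota m = e • iota m') ↔ (∀ t : T, lam t = 0 → t • m = 0) := by
  intro m
  have hOT : Module.FinitePresentation O T := Module.finitePresentation_of_finite O T
  have hTfree : Module.Free O T := Module.free_of_flat_of_isLocalRing
  set S := Algebra.algebraMapSubmonoid T (nonZeroDivisors O) with hS
  -- An element of TE lying in all primes is zero.
  have hzero : ∀ z : TE, (∀ P : Ideal TE, P.IsPrime → z ∈ P) → z = 0 := by
    intro z hz
    obtain ⟨n, hn⟩ : IsNilpotent z := nilpotent_iff_mem_prime.mpr hz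
    obtain ⟨⟨t, s⟩, hts⟩ := IsLocalization.surj S z
    have h0 : algebraMap T TE (t ^ n) = 0 := by
      rw [map_pow, ← hts, mul_pow, hn, zero_mul]
    rw [IsLocalization.map_eq_zero_iff S] at h0
    obtain ⟨⟨c', c, hc, rfl⟩, hct⟩ := h0
    have htn : t ^ n = 0 := by
      have hcs : c • (t ^ n) = 0 := by rwa [Algebra.smul_def]
      rcases smul_eq_zero.mp hcs with h | h
      · exact absurd h (nonZeroDivisors.ne_zero hc)
      · exact h
    have ht : t = 0 := IsNilpotent.eq_zero ⟨n, htn⟩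
    have hu : IsUnit (algebraMap T TE s.1) := IsLocalization.map_units TE s
    have : z * algebraMap T TE s.1 = 0 := by rw [hts, ht, map_zero]
    exact (hu.mul_left_eq_zero).mp this
  -- Key identity: e * x = lamE x • e for all x.
  have key : ∀ x : TE, e * x = algebraMap E TE (lamE x) * e := by
    intro x
    have h := hzero (e * x - algebraMap E TE (lamE x) * e) ?_
    · exact sub_eq_zero.mp h
    · intro P hP
      by_cases hPk : P = RingHom.ker lamE
      · subst hPk
        rw [RingHom.mem_ker]
        have : lamE (algebraMap E TE (lamE x)) = lamE x := lamE.commutes _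
        simp [he1, this]
      · have heP := he2 P hP hPk
        have hrw : e * x - algebraMap E TE (lamE x) * e
            = (x - algebraMap E TE (lamE x)) * e := by ring
        rw [hrw]
        exact Ideal.mul_mem_left P _ heP
  constructor
  · rintro ⟨m', hm'⟩ t ht
    have h1 : algebraMap T TE t * e = 0 := by
      rw [mul_comm, key, hlamE, ht, map_zero, map_zero, zero_mul]
    have h2 : iota (t • m) = 0 := by
      rw [hiota, hm', smul_smul, h1, zero_smul]
    rw [IsLocalizedModule.eq_zero_iff (nonZeroDivisors O)] at h2
    obtain ⟨c, hc⟩ := h2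
    rcases smul_eq_zero.mp hc with h | h
    · exact absurd h (nonZeroDivisors.ne_zero c.2)
    · exact h
  · intro h
    refine ⟨m, ?_⟩
    obtain ⟨⟨t, s⟩, hts⟩ := IsLocalization.surj S (1 - e)
    have hlt : lam t = 0 := by
      have h2 := congrArg lamE hts
      rw [map_mul, map_sub, map_one, he1, sub_self, zero_mul, hlamE] at h2
      exact IsFractionRing.injective O E (by rw [map_zero]; exact h2.symm)
    have htm : t • m = 0 := h t hlt
    have h0 : (algebraMap T TE s.1) • ((1 - e) • iota m) = 0 := by
      rw [smul_smul, mul_comm, hts, ← hiota, htm, map_zero]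
    obtain ⟨u, hu'⟩ := IsLocalization.map_units TE s
    rw [← hu'] at h0
    have hv : (1 - e) • iota m = 0 := by
      have h1 := congrArg (fun v => (↑u⁻¹ : TE) • v) h0
      simpa [smul_smul] using h1
    have hsub := sub_smul (1 : TE) e (iota m)
    rw [one_smul] at hsub
    rw [hsub] at hv
    exact (sub_eq_zero.mp hv)
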